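/- In the weakly degenerate case (a continuous on [0,1], a(x₀)=0 with x₀ ∈ (0,1), a > 0 off x₀, a ∈ W^{1,1}, (x-x₀)a' ≤ Ka a.e. with K ∈ (0,1)), the spaces H¹_{1/a}(0,1) := L²_{1/a}(0,1) ∩ H¹₀(0,1) and H¹₀(0,1) coincide as sets, and the norms ‖u‖²_{L²_{1/a}} + ‖u'‖²_{L²} and the standard H¹₀ norm are equivalent. -/

import Mathlib

open MeasureTheory Set

private lemma fubini_tri {c d : ℝ} {g h : ℝ → ℝ}
    (hg : IntegrableOn g (Ioc c d)) (hh : IntegrableOn h (Ioc c d)) :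
    ∫ t in Ioc c d, g t * (∫ s in Ioc t d, h s) =
      ∫ s in Ioc c d, (∫ t in Ioc c s, g t) * h s := by
  set μ := volume.restrict (Ioc c d) with hμ
  set F : ℝ → ℝ → ℝ := fun t s => if t < s then g t * h s else 0 with hF
  have hmeas : MeasurableSet {p : ℝ × ℝ | p.1 < p.2} :=
    measurableSet_lt measurable_fst measurable_snd
  have hFint : Integrable (Function.uncurry F) (μ.prod μ) := by
    have : Function.uncurry F =
        ({p : ℝ × ℝ | p.1 < p.2}).indicator (fun p => g p.1 * h p.2) := by
      funext p
      simp [Function.uncurry, hF, Set.indicator_apply]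
    rw [this]
    exact (hg.mul_prod hh).indicator hmeas
  have swap := MeasureTheory.integral_integral_swap hFint
  have hleft : ∫ t, ∫ s, F t s ∂μ ∂μ = ∫ t in Ioc c d, g t * (∫ s in Ioc t d, h s) := by
    refine setIntegral_congr_fun measurableSet_Ioc (fun t ht => ?_)
    have : (fun s => F t s) = (Ioi t).indicator (fun s => g t * h s) := by
      funext s; simp [hF, Set.indicator_apply]
    rw [hμ, this, setIntegral_indicator measurableSet_Ioi]
    have hset : Ioc c d ∩ Ioi t = Ioc t d := by
      rw [Set.Ioc_inter_Ioi, sup_eq_right.mpr ht.1.le]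
    rw [hset, integral_const_mul]
  have hright : ∫ s, ∫ t, F t s ∂μ ∂μ = ∫ s in Ioc c d, (∫ t in Ioc c s, g t) * h s := by
    refine setIntegral_congr_fun measurableSet_Ioc (fun s hs => ?_)
    have : (fun t => F t s) = (Iio s).indicator (fun t => g t * h s) := by
      funext t; simp [hF, Set.indicator_apply]
    rw [hμ, this, setIntegral_indicator measurableSet_Iio]
    have hset : Ioc c d ∩ Iio s = Ioo c s := by
      ext x
      simp only [mem_inter_iff, mem_Ioc, mem_Iio, mem_Ioo]
      exact ⟨fun ⟨⟨h1, _⟩, h3⟩ => ⟨h1, h3⟩, fun ⟨h1, h2⟩ => ⟨⟨h1, h2.le.trans hs.2⟩, h2⟩⟩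
    rw [hset, integral_mul_const, ← integral_Ioc_eq_integral_Ioo]
  rw [← hleft, ← hright]
  exact swap

private lemma prodFTC {c d : ℝ} (hcd : c ≤ d) {g b φ φ' : ℝ → ℝ}
    (hg : IntegrableOn g (Icc c d))
    (hb : ∀ s ∈ Icc c d, b s = b c + ∫ t in c..s, g t)
    (hbc : ContinuousOn b (Icc c d))
    (hφ : ∀ s ∈ Icc c d, HasDerivAt φ (φ' s) s)
    (hφ' : ContinuousOn φ' (Icc c d)) :
    (∫ t in Ioc c d, (g t * φ t + b t * φ' t)) = b d * φ d - b c * φ c := by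
  have hgI : IntegrableOn g (Ioc c d) := hg.mono_set Ioc_subset_Icc_self
  have hφcont : ContinuousOn φ (Icc c d) := fun x hx =>
    (hφ x hx).continuousAt.continuousWithinAt
  have hφ'I : IntegrableOn φ' (Ioc c d) :=
    (hφ'.integrableOn_Icc).mono_set Ioc_subset_Icc_self
  have hgφ : IntegrableOn (fun t => g t * φ t) (Ioc c d) :=
    (hg.mul_continuousOn hφcont isCompact_Icc).mono_set Ioc_subset_Icc_self
  have hbφ' : IntegrableOn (fun t => b t * φ' t) (Ioc c d) :=
    ((hbc.mul hφ').integrableOn_Icc).mono_set Ioc_subset_Icc_self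
  have hφFTC : ∀ t ∈ Icc c d, ∫ s in Ioc t d, φ' s = φ d - φ t := by
    intro t ht
    have h1 : ∫ s in t..d, φ' s = φ d - φ t := by
      refine intervalIntegral.integral_eq_sub_of_hasDerivAt (fun s hs => ?_) ?_
      · rw [uIcc_of_le ht.2] at hs
        exact hφ s ⟨ht.1.trans hs.1, hs.2⟩
      · refine ContinuousOn.intervalIntegrable (hφ'.mono ?_)
        rw [uIcc_of_le ht.2]
        exact Icc_subset_Icc ht.1 le_rfl
    rwa [intervalIntegral.integral_of_le ht.2] at h1
  have hbrep : ∀ s ∈ Icc c d, ∫ t in Ioc c s, g t = b s - b c := by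
    intro s hs
    have h1 := hb s hs
    rw [intervalIntegral.integral_of_le hs.1] at h1
    linarith
  have key := fubini_tri hgI hφ'I
  have hL : ∫ t in Ioc c d, g t * (∫ s in Ioc t d, φ' s) =
      (b d - b c) * φ d - ∫ t in Ioc c d, g t * φ t := by
    have h1 : ∫ t in Ioc c d, g t * (∫ s in Ioc t d, φ' s) =
        ∫ t in Ioc c d, (g t * φ d - g t * φ t) := by
      refine setIntegral_congr_fun measurableSet_Ioc (fun t ht => ?_)
      rw [hφFTC t ⟨ht.1.le, ht.2⟩]
      ring
    rw [h1, integral_sub (hgI.mul_const _) hgφ, integral_mul_const,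
      hbrep d ⟨hcd, le_rfl⟩]
  have hR : ∫ s in Ioc c d, (∫ t in Ioc c s, g t) * φ' s =
      (∫ s in Ioc c d, b s * φ' s) - b c * (φ d - φ c) := by
    have h1 : ∫ s in Ioc c d, (∫ t in Ioc c s, g t) * φ' s =
        ∫ s in Ioc c d, (b s * φ' s - b c * φ' s) := by
      refine setIntegral_congr_fun measurableSet_Ioc (fun s hs => ?_)
      rw [hbrep s ⟨hs.1.le, hs.2⟩]
      ring
    rw [h1, integral_sub hbφ' ((hφ'I.const_mul _))]
    rw [integral_const_mul, hφFTC c ⟨le_rfl, hcd⟩]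
  rw [integral_add hgφ hbφ']
  rw [hL] at key
  rw [hR] at key
  linarith

private lemma mono_right {p c d K : ℝ} (hpc : p < c) (hcd : c ≤ d) (_hK : 0 < K)
    {g b : ℝ → ℝ} (hg : IntegrableOn g (Icc c d))
    (hb : ∀ s ∈ Icc c d, b s = b c + ∫ t in c..s, g t)
    (hbc : ContinuousOn b (Icc c d))
    (hineq : ∀ᵐ s ∂(volume.restrict (Ioc c d)), (s - p) * g s ≤ K * b s) :
    b d * (d - p) ^ (-K) ≤ b c * (c - p) ^ (-K) := by
  set φ : ℝ → ℝ := fun s => (s - p) ^ (-K) with hφdef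
  set φ' : ℝ → ℝ := fun s => -K * (s - p) ^ (-K - 1) with hφ'def
  have hφ : ∀ s ∈ Icc c d, HasDerivAt φ (φ' s) s := by
    intro s hs
    have hsp : (0:ℝ) < s - p := by have := hs.1; linarith
    have h1 : HasDerivAt (fun y : ℝ => y - p) 1 s := (hasDerivAt_id s).sub_const p
    have h2 := h1.rpow_const (p := -K) (Or.inl (ne_of_gt hsp))
    simpa [hφ'def, hφdef] using h2
  have hφ' : ContinuousOn φ' (Icc c d) := by
    refine ContinuousOn.mul continuousOn_const ?_
    refine ContinuousOn.rpow_const ?_ (fun x hx => Or.inl ?_)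
    · exact (continuousOn_id.sub continuousOn_const)
    · exact sub_ne_zero.mpr (ne_of_gt (lt_of_lt_of_le hpc hx.1))
  have key := prodFTC hcd hg hb hbc hφ hφ'
  have hint : (∫ t in Ioc c d, (g t * φ t + b t * φ' t)) ≤ 0 := by
    refine integral_nonpos_of_ae ?_
    filter_upwards [hineq, self_mem_ae_restrict measurableSet_Ioc] with s hs hmem
    have hsp : (0:ℝ) < s - p := by have := hmem.1; linarith
    have hx : (0:ℝ) < (s - p) ^ (-K - 1) := Real.rpow_pos_of_pos hsp _
    have hrw : (s - p) ^ (-K) = (s - p) * (s - p) ^ (-K - 1) := by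
      have h := Real.rpow_add hsp 1 (-K - 1)
      rw [Real.rpow_one, show (1 : ℝ) + (-K - 1) = -K from by ring] at h
      exact h
    have : g s * φ s + b s * φ' s = ((s - p) * g s - K * b s) * (s - p) ^ (-K - 1) := by
      simp only [hφdef, hφ'def]
      rw [hrw]; ring
    rw [this]
    exact mul_nonpos_of_nonpos_of_nonneg (by linarith) hx.le
  rw [key] at hint
  simp only [hφdef] at hint
  linarith

private lemma mono_left {p c d K : ℝ} (hdp : d < p) (hcd : c ≤ d) (_hK : 0 < K)
    {g b : ℝ → ℝ} (hg : IntegrableOn g (Icc c d))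
    (hb : ∀ s ∈ Icc c d, b s = b c + ∫ t in c..s, g t)
    (hbc : ContinuousOn b (Icc c d))
    (hineq : ∀ᵐ s ∂(volume.restrict (Ioc c d)), (s - p) * g s ≤ K * b s) :
    b c * (p - c) ^ (-K) ≤ b d * (p - d) ^ (-K) := by
  set φ : ℝ → ℝ := fun s => (p - s) ^ (-K) with hφdef
  set φ' : ℝ → ℝ := fun s => K * (p - s) ^ (-K - 1) with hφ'def
  have hφ : ∀ s ∈ Icc c d, HasDerivAt φ (φ' s) s := by
    intro s hs
    have hsp : (0:ℝ) < p - s := by have := hs.2; linarith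
    have h1 : HasDerivAt (fun y : ℝ => p - y) (-1) s := (hasDerivAt_id s).const_sub p
    have h2 := h1.rpow_const (p := -K) (Or.inl (ne_of_gt hsp))
    have h3 : -1 * -K * (p - s) ^ (-K - 1) = φ' s := by simp only [hφ'def]; ring
    rw [h3] at h2
    exact h2
  have hφ' : ContinuousOn φ' (Icc c d) := by
    refine ContinuousOn.mul continuousOn_const ?_
    refine ContinuousOn.rpow_const ?_ (fun x hx => Or.inl ?_)
    · exact (continuousOn_const.sub continuousOn_id)
    · exact sub_ne_zero.mpr (ne_of_gt (lt_of_le_of_lt hx.2 hdp))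
  have key := prodFTC hcd hg hb hbc hφ hφ'
  have hint : (0:ℝ) ≤ ∫ t in Ioc c d, (g t * φ t + b t * φ' t) := by
    refine integral_nonneg_of_ae ?_
    filter_upwards [hineq, self_mem_ae_restrict measurableSet_Ioc] with s hs hmem
    have hsp : (0:ℝ) < p - s := by have := hmem.2; linarith
    have hx : (0:ℝ) < (p - s) ^ (-K - 1) := Real.rpow_pos_of_pos hsp _
    have hrw : (p - s) ^ (-K) = (p - s) * (p - s) ^ (-K - 1) := by
      have h := Real.rpow_add hsp 1 (-K - 1)
      rw [Real.rpow_one, show (1 : ℝ) + (-K - 1) = -K from by ring] at h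
      exact h
    have heq : g s * φ s + b s * φ' s = ((p - s) * g s + K * b s) * (p - s) ^ (-K - 1) := by
      simp only [hφdef, hφ'def]
      rw [hrw]; ring
    rw [heq]
    refine mul_nonneg ?_ hx.le
    nlinarith
  rw [key] at hint
  simp only [hφdef] at hint
  linarith



private lemma inv_int (a : ℝ → ℝ) (x₀ K : ℝ)
    (hx₀ : x₀ ∈ Set.Ioo (0:ℝ) 1)
    (hcont : ContinuousOn a (Set.Icc 0 1))
    (ha0 : a x₀ = 0)
    (hpos : ∀ x ∈ Set.Icc (0:ℝ) 1, x ≠ x₀ → 0 < a x)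
    (hAC : MeasureTheory.IntegrableOn (deriv a) (Set.Icc 0 1) ∧
      ∀ x ∈ Set.Icc (0:ℝ) 1, a x = a 0 + ∫ t in (0:ℝ)..x, deriv a t)
    (hK : K ∈ Set.Ioo (0:ℝ) 1)
    (hineq : ∀ᵐ x ∂(MeasureTheory.volume.restrict (Set.Icc (0:ℝ) 1)),
      (x - x₀) * deriv a x ≤ K * a x) :
    IntegrableOn (fun x => (a x)⁻¹) (Ioo 0 1) := by
  obtain ⟨hx0pos, hx0lt⟩ := hx₀
  obtain ⟨hK0, hK1⟩ := hK
  obtain ⟨hgInt, hrep⟩ := hAC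
  have ha1pos : 0 < a 1 := hpos 1 ⟨by norm_num, le_rfl⟩ (ne_of_gt hx0lt)
  have ha0pos : 0 < a 0 := hpos 0 ⟨le_rfl, by norm_num⟩ (ne_of_lt hx0pos)
  have hanneg : ∀ x ∈ Icc (0:ℝ) 1, 0 ≤ a x := by
    intro x hx
    by_cases h : x = x₀
    · rw [h, ha0]
    · exact (hpos x hx h).le
  have hii : ∀ x ∈ Icc (0:ℝ) 1, IntervalIntegrable (deriv a) volume 0 x := by
    intro x hx
    rw [intervalIntegrable_iff, uIoc_of_le hx.1]
    exact hgInt.mono_set (fun t ht => ⟨ht.1.le, ht.2.trans hx.2⟩)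
  have hrepcd : ∀ c ∈ Icc (0:ℝ) 1, ∀ s ∈ Icc (0:ℝ) 1,
      a s = a c + ∫ t in c..s, deriv a t := by
    intro c hc s hs
    have h1 := hrep s hs
    have h2 := hrep c hc
    have h3 := intervalIntegral.integral_interval_sub_left (hii s hs) (hii c hc)
    linarith
  have hlow1 : ∀ x, x₀ < x → x ≤ 1 →
      a 1 * (1 - x₀) ^ (-K) ≤ a x * (x - x₀) ^ (-K) := by
    intro x hxx hx1
    have hx0le : (0:ℝ) ≤ x := le_of_lt (lt_trans hx0pos hxx)
    have hsub : Icc x 1 ⊆ Icc (0:ℝ) 1 := Icc_subset_Icc hx0le le_rfl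
    refine mono_right hxx hx1 hK0 (hgInt.mono_set hsub)
      (fun s hs => hrepcd x ⟨hx0le, hx1⟩ s (hsub hs)) (hcont.mono hsub) ?_
    exact ae_restrict_of_ae_restrict_of_subset
      (show Ioc x 1 ⊆ Icc (0:ℝ) 1 from fun t ht => ⟨hx0le.trans ht.1.le, ht.2⟩) hineq
  have hlow2 : ∀ x, 0 ≤ x → x < x₀ →
      a 0 * (x₀ - 0) ^ (-K) ≤ a x * (x₀ - x) ^ (-K) := by
    intro x hx0 hxx
    have hx1 : x ≤ 1 := le_of_lt (lt_trans hxx hx0lt)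
    have hsub : Icc (0:ℝ) x ⊆ Icc (0:ℝ) 1 := Icc_subset_Icc le_rfl hx1
    refine mono_left hxx hx0 hK0 (hgInt.mono_set hsub)
      (fun s hs => hrepcd 0 ⟨le_rfl, by norm_num⟩ s (hsub hs)) (hcont.mono hsub) ?_
    exact ae_restrict_of_ae_restrict_of_subset
      (show Ioc (0:ℝ) x ⊆ Icc (0:ℝ) 1 from fun t ht => ⟨ht.1.le, ht.2.trans hx1⟩) hineq
  set m₁ : ℝ := a 1 * (1 - x₀) ^ (-K) with hm₁def
  set m₂ : ℝ := a 0 * x₀ ^ (-K) with hm₂def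
  set m : ℝ := min m₁ m₂ with hmdef
  have hm : 0 < m := lt_min
    (mul_pos ha1pos (Real.rpow_pos_of_pos (by linarith) _))
    (mul_pos ha0pos (Real.rpow_pos_of_pos hx0pos _))
  have habove : ∀ x ∈ Icc (0:ℝ) 1, x ≠ x₀ → m * |x - x₀| ^ K ≤ a x := by
    intro x hx hne
    rcases lt_or_gt_of_ne hne with hlt | hgt
    · have hp : (0:ℝ) < x₀ - x := by linarith
      have habs : |x - x₀| = x₀ - x := by
        rw [abs_of_neg (by linarith : x - x₀ < 0)]; ring
      have hcanc : (x₀ - x) ^ (-K) * (x₀ - x) ^ K = 1 := by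
        rw [← Real.rpow_add hp, show -K + K = 0 from by ring, Real.rpow_zero]
      have h1 := hlow2 x hx.1 hlt
      rw [sub_zero] at h1
      rw [habs]
      calc m * (x₀ - x) ^ K
          ≤ (a 0 * x₀ ^ (-K)) * (x₀ - x) ^ K :=
            mul_le_mul_of_nonneg_right (min_le_right _ _) (Real.rpow_nonneg hp.le K)
        _ ≤ (a x * (x₀ - x) ^ (-K)) * (x₀ - x) ^ K :=
            mul_le_mul_of_nonneg_right h1 (Real.rpow_nonneg hp.le K)
        _ = a x * ((x₀ - x) ^ (-K) * (x₀ - x) ^ K) := by ring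
        _ = a x := by rw [hcanc, mul_one]
    · have hp : (0:ℝ) < x - x₀ := by linarith
      have habs : |x - x₀| = x - x₀ := abs_of_pos hp
      have hcanc : (x - x₀) ^ (-K) * (x - x₀) ^ K = 1 := by
        rw [← Real.rpow_add hp, show -K + K = 0 from by ring, Real.rpow_zero]
      have h1 := hlow1 x hgt hx.2
      rw [habs]
      calc m * (x - x₀) ^ K
          ≤ (a 1 * (1 - x₀) ^ (-K)) * (x - x₀) ^ K :=
            mul_le_mul_of_nonneg_right (min_le_left _ _) (Real.rpow_nonneg hp.le K)
        _ ≤ (a x * (x - x₀) ^ (-K)) * (x - x₀) ^ K :=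
            mul_le_mul_of_nonneg_right h1 (Real.rpow_nonneg hp.le K)
        _ = a x * ((x - x₀) ^ (-K) * (x - x₀) ^ K) := by ring
        _ = a x := by rw [hcanc, mul_one]
  have hinv_le : ∀ x ∈ Ioo (0:ℝ) 1, (a x)⁻¹ ≤ m⁻¹ * |x - x₀| ^ (-K) := by
    intro x hx
    by_cases h : x = x₀
    · rw [h, ha0, inv_zero]
      exact mul_nonneg (inv_nonneg.mpr hm.le) (Real.rpow_nonneg (abs_nonneg _) _)
    · have hax := habove x (Ioo_subset_Icc_self hx) h
      have habs0 : (0:ℝ) < |x - x₀| := abs_pos.mpr (sub_ne_zero.mpr h)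
      have hpos' : 0 < m * |x - x₀| ^ K := mul_pos hm (Real.rpow_pos_of_pos habs0 K)
      have h1 : (a x)⁻¹ ≤ (m * |x - x₀| ^ K)⁻¹ := by
        apply inv_anti₀ hpos' hax
      rwa [mul_inv, ← Real.rpow_neg (abs_nonneg _)] at h1
  have hDabs : IntegrableOn (fun x => |x - x₀| ^ (-K)) (Ioo 0 1) := by
    have h1 : IntegrableOn (fun x : ℝ => |x - x₀| ^ (-K)) (Ioc 0 x₀) := by
      have h2 := (intervalIntegral.intervalIntegrable_rpow'
        (a := x₀) (b := 0) (r := -K) (by linarith)).comp_sub_left x₀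
      rw [sub_self, sub_zero, intervalIntegrable_iff, uIoc_of_le hx0pos.le] at h2
      refine h2.congr_fun (fun x hx => ?_) measurableSet_Ioc
      rw [abs_of_nonpos (by linarith [hx.2] : x - x₀ ≤ 0)]
      norm_num
    have h2 : IntegrableOn (fun x : ℝ => |x - x₀| ^ (-K)) (Ioc x₀ 1) := by
      have h3 := (intervalIntegral.intervalIntegrable_rpow'
        (a := 0) (b := 1 - x₀) (r := -K) (by linarith)).comp_sub_right x₀
      rw [zero_add, sub_add_cancel, intervalIntegrable_iff, uIoc_of_le hx0lt.le] at h3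
      refine h3.congr_fun (fun x hx => ?_) measurableSet_Ioc
      rw [abs_of_pos (by linarith [hx.1] : (0:ℝ) < x - x₀)]
    refine (h1.union h2).mono_set (fun x hx => ?_)
    rcases le_or_gt x x₀ with h | h
    · exact Or.inl ⟨hx.1, h⟩
    · exact Or.inr ⟨h, hx.2.le⟩
  have haem : AEMeasurable a (volume.restrict (Ioo (0:ℝ) 1)) :=
    (hcont.mono Ioo_subset_Icc_self).aemeasurable measurableSet_Ioo
  refine Integrable.mono' (hDabs.const_mul m⁻¹) haem.inv.aestronglyMeasurable ?_
  filter_upwards [self_mem_ae_restrict measurableSet_Ioo] with x hx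
  rw [Real.norm_eq_abs,
    abs_of_nonneg (inv_nonneg.mpr (hanneg x (Ioo_subset_Icc_self hx)))]
  exact hinv_le x hx


private lemma u_facts {u u' : ℝ → ℝ}
    (hu : ∀ x ∈ Set.Icc (0:ℝ) 1, HasDerivAt u (u' x) x)
    (hu0 : u 0 = 0)
    (hIu' : MeasureTheory.IntegrableOn (fun x => (u' x) ^ 2) (Set.Ioo 0 1)) :
    ∀ x ∈ Icc (0:ℝ) 1, u x ^ 2 ≤ ∫ x in Ioo (0:ℝ) 1, u' x ^ 2 := by
  have hu'aesm : AEStronglyMeasurable u' (volume.restrict (Ioo (0:ℝ) 1)) := by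
    have heq : ∀ᵐ x ∂volume.restrict (Ioo (0:ℝ) 1), deriv u x = u' x := by
      filter_upwards [self_mem_ae_restrict measurableSet_Ioo] with x hx
      exact (hu x (Ioo_subset_Icc_self hx)).deriv
    exact ((measurable_deriv u).aestronglyMeasurable).congr heq
  have hIoofin : volume (Ioo (0:ℝ) 1) < ⊤ := by
    rw [Real.volume_Ioo]; exact ENNReal.ofReal_lt_top
  have hconst1 : IntegrableOn (fun _ : ℝ => (1:ℝ)) (Ioo 0 1) :=
    integrableOn_const hIoofin.ne
  have hu'int : IntegrableOn u' (Ioo 0 1) := by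
    have hg1 : IntegrableOn (fun x => (1 + u' x ^ 2) / 2) (Ioo 0 1) :=
      (hconst1.add hIu').div_const 2
    refine Integrable.mono' hg1 hu'aesm ?_
    refine Filter.Eventually.of_forall (fun x => ?_)
    rw [Real.norm_eq_abs]
    nlinarith [sq_nonneg (|u' x| - 1), sq_abs (u' x), abs_nonneg (u' x)]
  have hu'abs : IntegrableOn (fun x => |u' x|) (Ioo 0 1) := hu'int.abs
  have hFTCu : ∀ x ∈ Icc (0:ℝ) 1, u x = ∫ t in (0:ℝ)..x, u' t := by
    intro x hx
    have hint : IntervalIntegrable u' volume 0 x := by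
      rw [intervalIntegrable_iff, uIoc_of_le hx.1]
      rw [integrableOn_Ioc_iff_integrableOn_Ioo]
      exact hu'int.mono_set (Ioo_subset_Ioo_right hx.2)
    have h := intervalIntegral.integral_eq_sub_of_hasDerivAt
      (f := u) (f' := u') (fun t ht => by
        rw [uIcc_of_le hx.1] at ht
        exact hu t ⟨ht.1, ht.2.trans hx.2⟩) hint
    rw [hu0, sub_zero] at h
    exact h.symm
  set E : ℝ := ∫ x in Ioo (0:ℝ) 1, u' x ^ 2 with hEdef
  have hE0 : 0 ≤ E := setIntegral_nonneg measurableSet_Ioo (fun x _ => sq_nonneg _)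
  have hCS : (∫ x in Ioo (0:ℝ) 1, |u' x|) ≤ Real.sqrt E := by
    have hconj : Real.HolderConjugate 2 2 := Real.HolderConjugate.two_two
    have h2 : (ENNReal.ofReal (2:ℝ)) = 2 := by
      rw [ENNReal.ofReal_ofNat]
    have habs_sm : AEStronglyMeasurable (fun x => |u' x|)
        (volume.restrict (Ioo (0:ℝ) 1)) := by
      simpa only [Real.norm_eq_abs] using hu'aesm.norm
    have hmf : MemLp (fun x => |u' x|) (ENNReal.ofReal 2)
        (volume.restrict (Ioo (0:ℝ) 1)) := by
      rw [h2]
      exact (memLp_two_iff_integrable_sq habs_sm).mpr (by simpa [sq_abs, IntegrableOn] using hIu')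
    have hmg : MemLp (fun _ : ℝ => (1:ℝ)) (ENNReal.ofReal 2)
        (volume.restrict (Ioo (0:ℝ) 1)) := by
      rw [h2]; exact memLp_const 1
    have h := integral_mul_le_Lp_mul_Lq_of_nonneg hconj
      (Filter.Eventually.of_forall (fun x => abs_nonneg (u' x)))
      (Filter.Eventually.of_forall (fun _ => zero_le_one)) hmf hmg
    simp only [mul_one] at h
    have hE' : (∫ x in Ioo (0:ℝ) 1, |u' x| ^ (2:ℝ)) = E := by
      refine setIntegral_congr_fun measurableSet_Ioo (fun x _ => ?_)
      rw [show ((2:ℝ)) = ((2:ℕ):ℝ) from by norm_num, Real.rpow_natCast, sq_abs]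
    have hone : (∫ _x in Ioo (0:ℝ) 1, (1:ℝ) ^ (2:ℝ)) = 1 := by
      simp [Real.volume_Ioo]
    rw [hE', hone, Real.one_rpow, mul_one] at h
    rw [Real.sqrt_eq_rpow]
    exact h
  intro x hx
  have hN : |u x| ≤ Real.sqrt E := by
    rw [hFTCu x hx]
    calc |∫ t in (0:ℝ)..x, u' t| ≤ ∫ t in (0:ℝ)..x, |u' t| :=
          intervalIntegral.abs_integral_le_integral_abs hx.1
      _ = ∫ t in Ioo (0:ℝ) x, |u' t| := by
          rw [intervalIntegral.integral_of_le hx.1, integral_Ioc_eq_integral_Ioo]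
      _ ≤ ∫ t in Ioo (0:ℝ) 1, |u' t| := by
          refine setIntegral_mono_set hu'abs
            (Filter.Eventually.of_forall (fun t => abs_nonneg _))
            (HasSubset.Subset.eventuallyLE (Ioo_subset_Ioo_right hx.2))
      _ ≤ Real.sqrt E := hCS
  calc u x ^ 2 = |u x| ^ 2 := (sq_abs _).symm
    _ ≤ Real.sqrt E ^ 2 := pow_le_pow_left₀ (abs_nonneg _) hN 2
    _ = E := Real.sq_sqrt hE0


/-- Proposition 2.5: in the weakly degenerate case, `H¹_{1/a}(0,1) = H¹₀(0,1)` as sets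
(every `u ∈ H¹₀` has `∫ u²/a < ∞`) and the corresponding norms are equivalent. -/
theorem stmt9 (a : ℝ → ℝ) (x₀ K : ℝ)
    (hx₀ : x₀ ∈ Set.Ioo (0:ℝ) 1)
    (hcont : ContinuousOn a (Set.Icc 0 1))
    (ha0 : a x₀ = 0)
    (hpos : ∀ x ∈ Set.Icc (0:ℝ) 1, x ≠ x₀ → 0 < a x)
    (hAC : MeasureTheory.IntegrableOn (deriv a) (Set.Icc 0 1) ∧
      ∀ x ∈ Set.Icc (0:ℝ) 1, a x = a 0 + ∫ t in (0:ℝ)..x, deriv a t)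
    (hK : K ∈ Set.Ioo (0:ℝ) 1)
    (hineq : ∀ᵐ x ∂(MeasureTheory.volume.restrict (Set.Icc (0:ℝ) 1)),
      (x - x₀) * deriv a x ≤ K * a x) :
    ∃ C ≥ (1:ℝ), ∀ (u u' : ℝ → ℝ),
      (∀ x ∈ Set.Icc (0:ℝ) 1, HasDerivAt u (u' x) x) →
      u 0 = 0 → u 1 = 0 →
      MeasureTheory.IntegrableOn (fun x => (u x) ^ 2) (Set.Ioo 0 1) →
      MeasureTheory.IntegrableOn (fun x => (u' x) ^ 2) (Set.Ioo 0 1) →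
      -- set coincidence: u ∈ H¹₀ implies u ∈ L²_{1/a}
      MeasureTheory.IntegrableOn (fun x => (u x) ^ 2 / a x) (Set.Ioo 0 1) ∧
      -- norm equivalence
      (1 / C) * ((∫ x in Set.Ioo (0:ℝ) 1, (u x) ^ 2) + ∫ x in Set.Ioo (0:ℝ) 1, (u' x) ^ 2) ≤
        (∫ x in Set.Ioo (0:ℝ) 1, (u x) ^ 2 / a x) + (∫ x in Set.Ioo (0:ℝ) 1, (u' x) ^ 2) ∧
      (∫ x in Set.Ioo (0:ℝ) 1, (u x) ^ 2 / a x) + (∫ x in Set.Ioo (0:ℝ) 1, (u' x) ^ 2) ≤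
        C * ((∫ x in Set.Ioo (0:ℝ) 1, (u x) ^ 2) + ∫ x in Set.Ioo (0:ℝ) 1, (u' x) ^ 2) := by
  have hanneg : ∀ x ∈ Icc (0:ℝ) 1, 0 ≤ a x := by
    intro x hx
    by_cases h : x = x₀
    · rw [h, ha0]
    · exact (hpos x hx h).le
  have hInvInt : IntegrableOn (fun x => (a x)⁻¹) (Ioo 0 1) :=
    inv_int a x₀ K hx₀ hcont ha0 hpos hAC hK hineq
  have haem : AEMeasurable a (volume.restrict (Ioo (0:ℝ) 1)) :=
    (hcont.mono Ioo_subset_Icc_self).aemeasurable measurableSet_Ioo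
  set M : ℝ := ∫ x in Ioo (0:ℝ) 1, (a x)⁻¹ with hMdef
  have hM0 : 0 ≤ M := setIntegral_nonneg measurableSet_Ioo
    (fun x hx => inv_nonneg.mpr (hanneg x (Ioo_subset_Icc_self hx)))
  refine ⟨M + 2, by linarith, ?_⟩
  intro u u' hu hu0 _hu1 hIu hIu'
  have hsup := u_facts hu hu0 hIu'
  set E : ℝ := ∫ x in Ioo (0:ℝ) 1, u' x ^ 2 with hEdef
  have hE0 : 0 ≤ E := setIntegral_nonneg measurableSet_Ioo (fun x _ => sq_nonneg _)
  set P : ℝ := ∫ x in Ioo (0:ℝ) 1, u x ^ 2 with hPdef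
  have hP0 : 0 ≤ P := setIntegral_nonneg measurableSet_Ioo (fun x _ => sq_nonneg _)
  have hIoofin : volume (Ioo (0:ℝ) 1) < ⊤ := by
    rw [Real.volume_Ioo]; exact ENNReal.ofReal_lt_top
  have hPE : P ≤ E := by
    have h1 : P ≤ ∫ _x in Ioo (0:ℝ) 1, E :=
      setIntegral_mono_on hIu (integrableOn_const hIoofin.ne)
        measurableSet_Ioo (fun x hx => hsup x (Ioo_subset_Icc_self hx))
    have h2 : (∫ _x in Ioo (0:ℝ) 1, E) = E := by simp [Real.volume_Ioo]
    linarith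
  have huc : ContinuousOn u (Icc (0:ℝ) 1) := fun x hx =>
    (hu x hx).continuousAt.continuousWithinAt
  have huam : AEMeasurable u (volume.restrict (Ioo (0:ℝ) 1)) :=
    (huc.mono Ioo_subset_Icc_self).aemeasurable measurableSet_Ioo
  have hqsm : AEStronglyMeasurable (fun x => u x ^ 2 / a x)
      (volume.restrict (Ioo (0:ℝ) 1)) :=
    ((huam.pow_const 2).div haem).aestronglyMeasurable
  have hqbound : ∀ x ∈ Ioo (0:ℝ) 1, u x ^ 2 / a x ≤ E * (a x)⁻¹ := by
    intro x hx
    rw [div_eq_mul_inv]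
    exact mul_le_mul_of_nonneg_right (hsup x (Ioo_subset_Icc_self hx))
      (inv_nonneg.mpr (hanneg x (Ioo_subset_Icc_self hx)))
  have hqnonneg : ∀ x ∈ Ioo (0:ℝ) 1, 0 ≤ u x ^ 2 / a x := fun x hx =>
    div_nonneg (sq_nonneg _) (hanneg x (Ioo_subset_Icc_self hx))
  have hQint : IntegrableOn (fun x => u x ^ 2 / a x) (Ioo 0 1) := by
    refine Integrable.mono' (hInvInt.const_mul E) hqsm ?_
    filter_upwards [self_mem_ae_restrict measurableSet_Ioo] with x hx
    rw [Real.norm_eq_abs, abs_of_nonneg (hqnonneg x hx)]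
    exact hqbound x hx
  set Q : ℝ := ∫ x in Ioo (0:ℝ) 1, u x ^ 2 / a x with hQdef
  have hQ0 : 0 ≤ Q := setIntegral_nonneg measurableSet_Ioo hqnonneg
  have hQle : Q ≤ E * M := by
    have h1 : Q ≤ ∫ x in Ioo (0:ℝ) 1, E * (a x)⁻¹ :=
      setIntegral_mono_on hQint (hInvInt.const_mul E) measurableSet_Ioo hqbound
    rw [integral_const_mul] at h1
    exact h1
  have hC : (0:ℝ) < M + 2 := by linarith
  refine ⟨hQint, ?_, ?_⟩
  · rw [one_div, inv_mul_le_iff₀ hC]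
    nlinarith [mul_nonneg hQ0 hM0, mul_nonneg hE0 hM0]
  · nlinarith [mul_nonneg hM0 hP0, mul_nonneg hE0 hM0]
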